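/- arXiv:math/0302339 — 4 statements merged into one kernel-verified Lean document; each statement's English description precedes it below -/
import Mathlib

section
/- Let n ≥ 1 and E ∈ ℝⁿ \ {0}, and define φ : (ℝ \ {0}) × ℝⁿ → ℝ by φ(t,x) = |x|²/(2t) − (t/2) E·x − (t³/24)|E|². Then for every t ≠ 0 and x ∈ ℝⁿ, φ solves the eikonal equation ∂_t φ(t,x) + (1/2)|∇_x φ(t,x)|² + E·x = 0. -/
open scoped InnerProductSpace

lemma aux_grad {n : ℕ} (E : EuclideanSpace ℝ (Fin n)) (t : ℝ) (c : ℝ)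
    (x : EuclideanSpace ℝ (Fin n)) :
    HasGradientAt (fun y : EuclideanSpace ℝ (Fin n) =>
      ‖y‖ ^ 2 / (2 * t) - t / 2 * ⟪E, y⟫_ℝ - c) (t⁻¹ • x - (t / 2) • E) x := by
  have key : (fun y : EuclideanSpace ℝ (Fin n) =>
      ‖y‖ ^ 2 / (2 * t) - t / 2 * ⟪E, y⟫_ℝ - c) =
      (fun y : EuclideanSpace ℝ (Fin n) =>
        (2 * t)⁻¹ • ⟪y, y⟫_ℝ - (t / 2) • ⟪E, y⟫_ℝ - c) := by
    funext y
    rw [← real_inner_self_eq_norm_sq, smul_eq_mul, smul_eq_mul, div_eq_mul_inv]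
    ring
  rw [key, hasGradientAt_iff_hasFDerivAt]
  have h1 : HasFDerivAt (fun y : EuclideanSpace ℝ (Fin n) => ⟪y, y⟫_ℝ)
      ((fderivInnerCLM ℝ (x, x)).comp ((ContinuousLinearMap.id ℝ _).prod
        (ContinuousLinearMap.id ℝ _))) x :=
    (hasFDerivAt_id x).inner ℝ (hasFDerivAt_id x)
  have h2 : HasFDerivAt (fun y : EuclideanSpace ℝ (Fin n) => ⟪E, y⟫_ℝ)
      (innerSL ℝ E) x := (innerSL ℝ E).hasFDerivAt
  have h := ((h1.const_smul ((2 * t)⁻¹)).sub (h2.const_smul (t / 2))).sub_const c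
  refine HasFDerivAt.congr_fderiv h ?_
  apply ContinuousLinearMap.ext
  intro y
  simp [InnerProductSpace.toDual, fderivInnerCLM_apply, inner_sub_left, inner_smul_left,
    real_inner_comm x y]
  ring

/-- the phase `φ(t,x) = |x|²/(2t) − (t/2) E·x − (t³/24)|E|²` solves the
eikonal equation `∂_t φ + (1/2)|∇_x φ|² + E·x = 0` for `t ≠ 0`. -/
theorem stmt_5 {n : ℕ} (hn : 1 ≤ n)
    (E : EuclideanSpace ℝ (Fin n)) (hE : E ≠ 0)
    (φ : ℝ → EuclideanSpace ℝ (Fin n) → ℝ)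
    (hφ : ∀ t x, φ t x = ‖x‖ ^ 2 / (2 * t) - t / 2 * ⟪E, x⟫_ℝ - t ^ 3 / 24 * ‖E‖ ^ 2) :
    ∀ t : ℝ, t ≠ 0 → ∀ x : EuclideanSpace ℝ (Fin n),
      deriv (fun s => φ s x) t + (1 / 2) * ‖gradient (φ t) x‖ ^ 2 + ⟪E, x⟫_ℝ = 0 := by
  intro t ht x
  -- time derivative
  have hfun : (fun s => φ s x) = fun s : ℝ =>
      ‖x‖ ^ 2 / 2 * s⁻¹ - s * (⟪E, x⟫_ℝ / 2) - s ^ 3 * (‖E‖ ^ 2 / 24) := by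
    funext s
    rw [hφ s x, div_eq_mul_inv, mul_inv]
    ring
  have hderiv : deriv (fun s => φ s x) t =
      ‖x‖ ^ 2 / 2 * -(t ^ 2)⁻¹ - ⟪E, x⟫_ℝ / 2 - (3 : ℕ) * t ^ 2 * (‖E‖ ^ 2 / 24) := by
    rw [hfun]
    have ha : HasDerivAt (fun s : ℝ => ‖x‖ ^ 2 / 2 * s⁻¹) (‖x‖ ^ 2 / 2 * -(t ^ 2)⁻¹) t :=
      (hasDerivAt_inv ht).const_mul _
    have hb : HasDerivAt (fun s : ℝ => s * (⟪E, x⟫_ℝ / 2)) (⟪E, x⟫_ℝ / 2) t := by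
      simpa using (hasDerivAt_id t).mul_const (⟪E, x⟫_ℝ / 2)
    have hc : HasDerivAt (fun s : ℝ => s ^ 3 * (‖E‖ ^ 2 / 24))
        ((3 : ℕ) * t ^ 2 * (‖E‖ ^ 2 / 24)) t := by
      simpa using (hasDerivAt_pow 3 t).mul_const (‖E‖ ^ 2 / 24)
    exact ((ha.sub hb).sub hc).deriv
  -- gradient
  have hgrad : gradient (φ t) x = t⁻¹ • x - (t / 2) • E := by
    have : φ t = fun y : EuclideanSpace ℝ (Fin n) =>
        ‖y‖ ^ 2 / (2 * t) - t / 2 * ⟪E, y⟫_ℝ - t ^ 3 / 24 * ‖E‖ ^ 2 := funext fun y => hφ t y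
    rw [this]
    exact (aux_grad E t _ x).gradient
  have hnorm : ‖gradient (φ t) x‖ ^ 2 =
      ‖x‖ ^ 2 / t ^ 2 - ⟪E, x⟫_ℝ + t ^ 2 / 4 * ‖E‖ ^ 2 := by
    rw [hgrad, norm_sub_sq_real, real_inner_smul_left, real_inner_smul_right,
      norm_smul, norm_smul, real_inner_comm x E]
    simp only [Real.norm_eq_abs, mul_pow, sq_abs]
    field_simp
    ring
  rw [hderiv, hnorm]
  field_simp
  ring
end

section
/- Let n ≥ 1, ε ∈ (0,1], E ∈ ℝⁿ \ {0}, and let G : [0,∞) → ℝ be C¹. Define F : ℂ → ℂ by F(z) = z G(|z|²). Let w : ℝⁿ → ℂ be differentiable and t ≠ 0. Then at every point x ∈ ℝⁿ, with Jw := (x/ε) w + i t ∇w − (t²/(2ε)) E w (ℂⁿ-valued), one has the gauge-invariant chain rule J(F∘w)(x) = (G(|w(x)|²) + |w(x)|² G′(|w(x)|²)) · Jw(x) − w(x)² G′(|w(x)|²) · conj(Jw(x)), where conj denotes componentwise complex conjugation; that is, J_E^ε(t) F(w) = ∂_z F(w) J_E^ε(t) w − ∂_{z̄} F(w) conj(J_E^ε(t)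 w), with Wirtinger derivatives ∂_z F(z) = G(|z|²) + |z|² G′(|z|²) and ∂_{z̄} F(z) = z² G′(|z|²). -/
open Complex
open scoped InnerProductSpace

/-- gauge-invariant chain rule for the operator `J_E^ε(t)`:
for `F(z) = z G(|z|²)` one has
`J(F∘w) = ∂_z F(w) · Jw − ∂_{z̄} F(w) · conj(Jw)`, with
`∂_z F(z) = G(|z|²) + |z|² G′(|z|²)` and `∂_{z̄} F(z) = z² G′(|z|²)`. -/
theorem stmt_9 {n : ℕ} (hn : 1 ≤ n) (ε : ℝ) (hε : ε ∈ Set.Ioc (0 : ℝ) 1)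
    (E : EuclideanSpace ℝ (Fin n)) (hE : E ≠ 0)
    (G : ℝ → ℝ) (hG : ContDiffOn ℝ 1 G (Set.Ici 0))
    (w : EuclideanSpace ℝ (Fin n) → ℂ) (hw : Differentiable ℝ w)
    (t : ℝ) (ht : t ≠ 0) :
    ∀ (x : EuclideanSpace ℝ (Fin n)) (i : Fin n),
      -- the `i`-th component of `J_E^ε(t)(F ∘ w)` at `x` :
      ((x i : ℝ) / ε) * (w x * (G (‖w x‖ ^ 2) : ℝ))
        + Complex.I * t * fderiv ℝ (fun y => w y * (G (‖w y‖ ^ 2) : ℝ)) x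
            (EuclideanSpace.single i 1)
        - ((t ^ 2 / (2 * ε) : ℝ) : ℂ) * (E i : ℝ) * (w x * (G (‖w x‖ ^ 2) : ℝ))
      = (((G (‖w x‖ ^ 2) : ℝ) : ℂ) + ((‖w x‖ ^ 2 : ℝ) : ℂ) *
            ((derivWithin G (Set.Ici 0) (‖w x‖ ^ 2) : ℝ) : ℂ)) *
          (((x i : ℝ) / ε) * w x
            + Complex.I * t * fderiv ℝ w x (EuclideanSpace.single i 1)
            - ((t ^ 2 / (2 * ε) : ℝ) : ℂ) * (E i : ℝ) * w x)
        - w x ^ 2 * ((derivWithin G (Set.Ici 0) (‖w x‖ ^ 2) : ℝ) : ℂ) *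
          (starRingEnd ℂ) (((x i : ℝ) / ε) * w x
            + Complex.I * t * fderiv ℝ w x (EuclideanSpace.single i 1)
            - ((t ^ 2 / (2 * ε) : ℝ) : ℂ) * (E i : ℝ) * w x) := by
  intro x i
  set v := EuclideanSpace.single i (1:ℝ) with hv
  set u := w x with hu
  set Dc := fderiv ℝ w x with hDc
  have hwx : HasFDerivAt w Dc x := (hw x).hasFDerivAt
  have hnorm : HasFDerivAt (fun y => ‖w y‖ ^ 2) (2 • (innerSL ℝ u).comp Dc) x := hwx.norm_sq
  have hs : (‖u‖ ^ 2 : ℝ) ∈ Set.Ici (0:ℝ) := Set.mem_Ici.mpr (sq_nonneg _)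
  have hGd : HasDerivWithinAt G (derivWithin G (Set.Ici 0) (‖u‖ ^ 2)) (Set.Ici 0) (‖u‖ ^ 2) :=
    (hG.differentiableOn one_ne_zero (‖u‖ ^ 2) hs).hasDerivWithinAt
  have hcomp : HasFDerivAt (fun y => G (‖w y‖ ^ 2))
      (derivWithin G (Set.Ici 0) (‖u‖ ^ 2) • (2 • (innerSL ℝ u).comp Dc)) x := by
    rw [← hasFDerivWithinAt_univ]
    exact hGd.comp_hasFDerivWithinAt x hnorm.hasFDerivWithinAt (fun y _ => Set.mem_Ici.mpr (sq_nonneg _))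
  have hofc : HasFDerivAt (fun y => ((G (‖w y‖ ^ 2) : ℝ) : ℂ))
      (Complex.ofRealCLM.comp
        (derivWithin G (Set.Ici 0) (‖u‖ ^ 2) • (2 • (innerSL ℝ u).comp Dc))) x :=
    Complex.ofRealCLM.hasFDerivAt.comp x hcomp
  have hmul := hwx.mul hofc
  have hder : fderiv ℝ (fun y => w y * (G (‖w y‖ ^ 2) : ℝ)) x v
      = Dc v * (G (‖u‖ ^ 2) : ℝ)
        + u * ((derivWithin G (Set.Ici 0) (‖u‖ ^ 2) : ℝ) : ℂ)
          * ((starRingEnd ℂ) u * Dc v + u * (starRingEnd ℂ) (Dc v)) := by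
    rw [show (fun y => w y * ((G (‖w y‖ ^ 2) : ℝ) : ℂ)) = (w * fun y => ((G (‖w y‖ ^ 2) : ℝ) : ℂ)) from rfl, hmul.fderiv]
    simp only [ContinuousLinearMap.add_apply, ContinuousLinearMap.smul_apply,
      ContinuousLinearMap.comp_apply, ContinuousLinearMap.coe_smul', Pi.smul_apply,
      Complex.ofRealCLM_apply, Complex.inner, innerSL_apply_apply]
    have key : (starRingEnd ℂ) u * Dc v + u * (starRingEnd ℂ) (Dc v)
        = ((2 * ((starRingEnd ℂ) u * Dc v).re : ℝ) : ℂ) := by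
      rw [← Complex.add_conj, map_mul, Complex.conj_conj]
    rw [key]
    push_cast
    simp only [smul_eq_mul]
    push_cast
    rw [← hu]
    ring
  have hucu : u * (starRingEnd ℂ) u = ((‖u‖ ^ 2 : ℝ) : ℂ) := by
    rw [Complex.mul_conj]
    norm_cast
    rw [Complex.normSq_eq_norm_sq]
  push_cast at hucu
  rw [hder]
  simp only [map_add, map_sub, map_mul, map_div₀, Complex.conj_ofReal, Complex.conj_I]
  push_cast
  linear_combination (((x i : ℝ) : ℂ) / ε - (t:ℂ) ^ 2 / (2 * ε) * (E i : ℝ))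
      * ((derivWithin G (Set.Ici 0) (‖u‖ ^ 2) : ℝ) : ℂ) * u * hucu
    + Complex.I * t * ((derivWithin G (Set.Ici 0) (‖u‖ ^ 2) : ℝ) : ℂ) * Dc v * hucu
end

section
/- Let n ≥ 1, E ∈ ℝⁿ \ {0}, let v : ℝ × ℝⁿ → ℂ with v(t,·) differentiable and v(t,·), ∇_x v(t,·) ∈ L²(ℝⁿ) for each t, and define u(t,x) = v(t, x + (t²/2)E) · exp(−i(t E·x + (t³/6)|E|²)) (the case ε = 1). Then for every t ∈ ℝ, ‖(t E − i∇_x) u(t,·)‖_{L²(ℝⁿ)} = ‖∇_x v(t,·)‖_{L²(ℝⁿ)}, where (t E − i∇_x)u denotes the ℂⁿ-valued function x ↦ t E u(t,x) − i ∇_x u(t,x). -/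
open Complex MeasureTheory
open scoped InnerProductSpace

/-- under the Avron–Herbst transform (`ε = 1`), the `L²` norm of
`(tE − i∇_x)u(t,·)` equals the `L²` norm of `∇_x v(t,·)`. -/
theorem stmt_12 {n : ℕ} (hn : 1 ≤ n)
    (E : EuclideanSpace ℝ (Fin n)) (hE : E ≠ 0)
    (v : ℝ → EuclideanSpace ℝ (Fin n) → ℂ)
    (hv_diff : ∀ t, Differentiable ℝ (v t))
    (hv_L2 : ∀ t, MemLp (v t) 2 volume)
    (hgrad_L2 : ∀ t, MemLp (fun x => (WithLp.toLp 2 (fun i => fderiv ℝ (v t) x (EuclideanSpace.single i 1)) :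
      EuclideanSpace ℂ (Fin n))) 2 volume)
    (u : ℝ → EuclideanSpace ℝ (Fin n) → ℂ)
    (hu : ∀ t x, u t x = v t (x + (t ^ 2 / 2) • E) *
      Complex.exp (-(Complex.I * ((t * ⟪E, x⟫_ℝ + t ^ 3 / 6 * ‖E‖ ^ 2 : ℝ) : ℂ)))) :
    ∀ t : ℝ,
      eLpNorm (fun x => (WithLp.toLp 2 (fun i =>
          (t : ℂ) * (E i : ℝ) * u t x
            - Complex.I * fderiv ℝ (u t) x (EuclideanSpace.single i 1)) :
        EuclideanSpace ℂ (Fin n))) 2 volume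
      = eLpNorm (fun x => (WithLp.toLp 2 (fun i => fderiv ℝ (v t) x (EuclideanSpace.single i 1)) :
          EuclideanSpace ℂ (Fin n))) 2 volume := by
  intro t
  set a : EuclideanSpace ℝ (Fin n) := (t ^ 2 / 2) • E with ha
  set w : EuclideanSpace ℝ (Fin n) → EuclideanSpace ℂ (Fin n) :=
    fun x => WithLp.toLp 2 (fun i => fderiv ℝ (v t) x (EuclideanSpace.single i 1)) with hw
  set ph : EuclideanSpace ℝ (Fin n) → ℂ :=
    fun x => Complex.exp (-(Complex.I * ((t * ⟪E, x⟫_ℝ + t ^ 3 / 6 * ‖E‖ ^ 2 : ℝ) : ℂ))) with hph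
  -- the linear part of the phase
  set L : EuclideanSpace ℝ (Fin n) →L[ℝ] ℂ :=
    (-(Complex.I * t)) • (Complex.ofRealCLM.comp (innerSL ℝ E)) with hL
  have hLapp : ∀ y, L y = -(Complex.I * t * (⟪E, y⟫_ℝ : ℂ)) := by
    intro y
    simp [hL, mul_assoc]
  have hue : u t = fun x => v t (x + a) * ph x := by
    funext x; rw [hu t x]
  have hphd : ∀ x, HasFDerivAt ph (ph x • L) x := by
    intro x
    have h1 : HasFDerivAt (fun y : EuclideanSpace ℝ (Fin n) =>
        -(Complex.I * ((t * ⟪E, y⟫_ℝ + t ^ 3 / 6 * ‖E‖ ^ 2 : ℝ) : ℂ))) L x := by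
      have : (fun y : EuclideanSpace ℝ (Fin n) =>
          -(Complex.I * ((t * ⟪E, y⟫_ℝ + t ^ 3 / 6 * ‖E‖ ^ 2 : ℝ) : ℂ)))
          = fun y => L y + (-(Complex.I * ((t ^ 3 / 6 * ‖E‖ ^ 2 : ℝ) : ℂ))) := by
        funext y
        rw [hLapp]
        push_cast
        ring
      rw [this]
      exact (L.hasFDerivAt).add_const _
    exact h1.cexp
  have huderiv : ∀ x, HasFDerivAt (u t)
      ((v t (x + a)) • (ph x • L) + (ph x) • (fderiv ℝ (v t) (x + a))) x := by
    intro x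
    rw [hue]
    have hf : HasFDerivAt (fun y => v t (y + a)) (fderiv ℝ (v t) (x + a)) x := by
      have h1 : HasFDerivAt (fun y : EuclideanSpace ℝ (Fin n) => y + a)
          (ContinuousLinearMap.id ℝ _) x := (hasFDerivAt_id x).add_const a
      have h2 := ((hv_diff t (x + a)).hasFDerivAt).comp x h1
      exact h2
    exact hf.mul (hphd x)
  -- pointwise formula for the components
  have hcomp : ∀ x i, (t : ℂ) * (E i : ℝ) * u t x
      - Complex.I * fderiv ℝ (u t) x (EuclideanSpace.single i 1)
      = (-Complex.I * ph x) * (fderiv ℝ (v t) (x + a) (EuclideanSpace.single i 1)) := by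
    intro x i
    have hd := (huderiv x).fderiv
    rw [hd]
    have hEi : (⟪E, (EuclideanSpace.single i (1:ℝ))⟫_ℝ : ℝ) = E i := by
      rw [EuclideanSpace.inner_single_right]; simp
    have hLe : L (EuclideanSpace.single i 1) = -(Complex.I * t * (E i : ℂ)) := by
      rw [hLapp, hEi]
    rw [show u t x = v t (x + a) * ph x from congrFun hue x]
    simp only [ContinuousLinearMap.add_apply, ContinuousLinearMap.smul_apply, hLe,
      smul_eq_mul]
    linear_combination (t * ((E i : ℝ) : ℂ) * v t (x + a) * ph x) * Complex.I_sq
  have h2 := eLpNorm_comp_measurePreserving (p := 2)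
      (hgrad_L2 t).aestronglyMeasurable (measurePreserving_add_right volume a)
  refine Eq.trans ?_ h2
  refine eLpNorm_congr_norm_ae (Filter.Eventually.of_forall fun x => ?_)
  have heq : (WithLp.toLp 2 (fun i =>
      (t : ℂ) * (E i : ℝ) * u t x
        - Complex.I * fderiv ℝ (u t) x (EuclideanSpace.single i 1)) :
      EuclideanSpace ℂ (Fin n)) = (-Complex.I * ph x) • w (x + a) := by
    ext i
    simp only [PiLp.smul_apply, smul_eq_mul, hw, PiLp.toLp_apply]
    exact hcomp x i
  rw [heq, norm_smul]
  have h1 : ‖-Complex.I * ph x‖ = 1 := by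
    rw [norm_mul]
    have hph1 : ‖ph x‖ = 1 := by
      show ‖Complex.exp (-(Complex.I * ((t * ⟪E, x⟫_ℝ + t ^ 3 / 6 * ‖E‖ ^ 2 : ℝ) : ℂ)))‖ = 1
      generalize (t * ⟪E, x⟫_ℝ + t ^ 3 / 6 * ‖E‖ ^ 2 : ℝ) = r
      rw [Complex.norm_exp]
      simp
    simp [hph1]
  rw [h1, one_mul]
  rfl
end

section
/- Let n ≥ 1, E ∈ ℝⁿ \ {0}, let v : ℝ × ℝⁿ → ℂ with v(t,·) differentiable and x v(t,·), v(t,·), ∇_x v(t,·) ∈ L²(ℝⁿ) for each t, and define u(t,x) = v(t, x + (t²/2)E) · exp(−i(t E·x + (t³/6)|E|²)) (the case ε = 1). Then for every t ∈ ℝ, ‖J_E(t)u(t,·)‖_{L²(ℝⁿ)} = ‖J(t)v(t,·)‖_{L²(ℝⁿ)}, where J_E(t)u = x u + i t ∇_x u − (t²/2) E u and J(t)v = x v + i t ∇_x v are ℂⁿ-valued, the norm being the L² norm with the Euclidean norm on ℂⁿ inside the integral. -/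
open Complex MeasureTheory
open scoped InnerProductSpace

section AuxAH

variable {n : ℕ}

private lemma ah_fderiv (E : EuclideanSpace ℝ (Fin n)) (t : ℝ)
    (v : EuclideanSpace ℝ (Fin n) → ℂ) (hv : Differentiable ℝ v)
    (x : EuclideanSpace ℝ (Fin n)) (i : Fin n) :
    fderiv ℝ (fun x => v (x + (t ^ 2 / 2) • E) *
        Complex.exp (-(Complex.I * ((t * ⟪E, x⟫_ℝ + t ^ 3 / 6 * ‖E‖ ^ 2 : ℝ) : ℂ)))) x
      (EuclideanSpace.single i 1)
    = Complex.exp (-(Complex.I * ((t * ⟪E, x⟫_ℝ + t ^ 3 / 6 * ‖E‖ ^ 2 : ℝ) : ℂ))) *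
        (fderiv ℝ v (x + (t ^ 2 / 2) • E) (EuclideanSpace.single i 1))
      + v (x + (t ^ 2 / 2) • E) *
        (Complex.exp (-(Complex.I * ((t * ⟪E, x⟫_ℝ + t ^ 3 / 6 * ‖E‖ ^ 2 : ℝ) : ℂ))) *
          (-(Complex.I * (t * (E i))))) := by
  have h1 : HasFDerivAt (fun x : EuclideanSpace ℝ (Fin n) => v (x + (t ^ 2 / 2) • E))
      ((fderiv ℝ v (x + (t ^ 2 / 2) • E)).comp (ContinuousLinearMap.id ℝ _)) x :=
    ((hv _).hasFDerivAt).comp x ((hasFDerivAt_id x).add_const _)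
  have hp : HasFDerivAt (fun x : EuclideanSpace ℝ (Fin n) =>
      (t * ⟪E, x⟫_ℝ + t ^ 3 / 6 * ‖E‖ ^ 2 : ℝ)) (t • (innerSL ℝ E)) x :=
    (((innerSL ℝ E).hasFDerivAt).const_mul t).add_const _
  have ha : HasFDerivAt (fun x : EuclideanSpace ℝ (Fin n) =>
      -(Complex.I * ((t * ⟪E, x⟫_ℝ + t ^ 3 / 6 * ‖E‖ ^ 2 : ℝ) : ℂ)))
      (-(Complex.I • (Complex.ofRealCLM.comp (t • (innerSL ℝ E))))) x :=
    (((Complex.ofRealCLM.hasFDerivAt.comp x hp).const_mul Complex.I)).neg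
  have h : fderiv ℝ (fun x : EuclideanSpace ℝ (Fin n) => v (x + (t ^ 2 / 2) • E) *
        Complex.exp (-(Complex.I * ((t * ⟪E, x⟫_ℝ + t ^ 3 / 6 * ‖E‖ ^ 2 : ℝ) : ℂ)))) x = _ :=
    (h1.mul ha.cexp).fderiv
  rw [h]
  simp [ContinuousLinearMap.smul_apply, ContinuousLinearMap.comp_apply,
    EuclideanSpace.inner_single_right, smul_eq_mul]
  ring

private lemma ah_nnnorm_exp (r : ℝ) : ‖Complex.exp (-(Complex.I * (r : ℂ)))‖₊ = 1 := by
  refine NNReal.coe_injective ?_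
  rw [coe_nnnorm, show -(Complex.I * (r : ℂ)) = ((-r : ℝ) : ℂ) * Complex.I by push_cast; ring,
    Complex.norm_exp_ofReal_mul_I, NNReal.coe_one]

private lemma ah_enorm_smul (e : ℂ) (he : ‖e‖ = 1) (w : Fin n → ℂ) :
    ‖(WithLp.toLp 2 (fun i => e * w i) : EuclideanSpace ℂ (Fin n))‖ₑ
      = ‖(WithLp.toLp 2 w : EuclideanSpace ℂ (Fin n))‖ₑ := by
  have h : (WithLp.toLp 2 (fun i => e * w i) : EuclideanSpace ℂ (Fin n))
      = e • (WithLp.toLp 2 w : EuclideanSpace ℂ (Fin n)) := rfl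
  have he' : ‖e‖ₑ = 1 := by rw [← ofReal_norm, he, ENNReal.ofReal_one]
  rw [h, enorm_smul, he', one_mul]

end AuxAH

/-- under the Avron–Herbst transform (`ε = 1`), the `L²` norm of
`J_E(t)u = x u + it∇_x u − (t²/2)E u` equals that of the Galilean operator
`J(t)v = x v + it∇_x v`. -/
theorem stmt_13 {n : ℕ} (hn : 1 ≤ n)
    (E : EuclideanSpace ℝ (Fin n)) (hE : E ≠ 0)
    (v : ℝ → EuclideanSpace ℝ (Fin n) → ℂ)
    (hv_diff : ∀ t, Differentiable ℝ (v t))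
    (hv_L2 : ∀ t, MemLp (v t) 2 volume)
    (hxv_L2 : ∀ t, MemLp (fun x => (WithLp.toLp 2 fun i => ((x i : ℝ) : ℂ) * v t x :
      EuclideanSpace ℂ (Fin n))) 2 volume)
    (hgrad_L2 : ∀ t, MemLp (fun x => (WithLp.toLp 2 fun i => fderiv ℝ (v t) x (EuclideanSpace.single i 1) :
      EuclideanSpace ℂ (Fin n))) 2 volume)
    (u : ℝ → EuclideanSpace ℝ (Fin n) → ℂ)
    (hu : ∀ t x, u t x = v t (x + (t ^ 2 / 2) • E) *
      Complex.exp (-(Complex.I * ((t * ⟪E, x⟫_ℝ + t ^ 3 / 6 * ‖E‖ ^ 2 : ℝ) : ℂ)))) :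
    ∀ t : ℝ,
      eLpNorm (fun x => (WithLp.toLp 2 fun i =>
          ((x i : ℝ) : ℂ) * u t x
            + Complex.I * t * fderiv ℝ (u t) x (EuclideanSpace.single i 1)
            - ((t ^ 2 / 2 : ℝ) : ℂ) * (E i : ℝ) * u t x :
        EuclideanSpace ℂ (Fin n))) 2 volume
      = eLpNorm (fun x => (WithLp.toLp 2 fun i =>
          ((x i : ℝ) : ℂ) * v t x
            + Complex.I * t * fderiv ℝ (v t) x (EuclideanSpace.single i 1) :
        EuclideanSpace ℂ (Fin n))) 2 volume := by
  intro t
  have hut : u t = fun x => v t (x + (t ^ 2 / 2) • E) *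
      Complex.exp (-(Complex.I * ((t * ⟪E, x⟫_ℝ + t ^ 3 / 6 * ‖E‖ ^ 2 : ℝ) : ℂ))) :=
    funext (hu t)
  -- pointwise component identity
  have hcomp : ∀ (x : EuclideanSpace ℝ (Fin n)) (i : Fin n),
      ((x i : ℝ) : ℂ) * u t x
        + Complex.I * t * fderiv ℝ (u t) x (EuclideanSpace.single i 1)
        - ((t ^ 2 / 2 : ℝ) : ℂ) * (E i : ℝ) * u t x
      = Complex.exp (-(Complex.I * ((t * ⟪E, x⟫_ℝ + t ^ 3 / 6 * ‖E‖ ^ 2 : ℝ) : ℂ)))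
        * ((((x + (t ^ 2 / 2) • E) i : ℝ) : ℂ) * v t (x + (t ^ 2 / 2) • E)
          + Complex.I * t * fderiv ℝ (v t) (x + (t ^ 2 / 2) • E) (EuclideanSpace.single i 1)) := by
    intro x i
    have hD : fderiv ℝ (u t) x (EuclideanSpace.single i 1)
        = Complex.exp (-(Complex.I * ((t * ⟪E, x⟫_ℝ + t ^ 3 / 6 * ‖E‖ ^ 2 : ℝ) : ℂ)))
            * (fderiv ℝ (v t) (x + (t ^ 2 / 2) • E) (EuclideanSpace.single i 1))
          + v t (x + (t ^ 2 / 2) • E) *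
            (Complex.exp (-(Complex.I * ((t * ⟪E, x⟫_ℝ + t ^ 3 / 6 * ‖E‖ ^ 2 : ℝ) : ℂ)))
              * (-(Complex.I * (t * (E i))))) := by
      rw [hut]; exact ah_fderiv E t (v t) (hv_diff t) x i
    have hxi : ((x + (t ^ 2 / 2) • E) i : ℝ) = x i + (t ^ 2 / 2) * E i := rfl
    simp only [hxi, hD, hu t x]
    generalize Complex.exp (-(Complex.I *
      ((t * ⟪E, x⟫_ℝ + t ^ 3 / 6 * ‖E‖ ^ 2 : ℝ) : ℂ))) = e
    push_cast
    linear_combination (-(t : ℂ) ^ 2 * ((E i : ℝ) : ℂ) * v t (x + (t ^ 2 / 2) • E) * e) *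
      Complex.I_sq
  -- pass to lintegrals and use translation invariance
  have h2 : (2 : ENNReal) ≠ 0 := by norm_num
  have h2' : (2 : ENNReal) ≠ ⊤ := by norm_num
  rw [eLpNorm_eq_lintegral_rpow_enorm_toReal h2 h2', eLpNorm_eq_lintegral_rpow_enorm_toReal h2 h2']
  congr 1
  conv_rhs => rw [← lintegral_add_right_eq_self _ ((t ^ 2 / 2) • E)]
  refine lintegral_congr fun x => ?_
  simp only []
  congr 1
  simp only [hcomp x]
  exact ah_enorm_smul _ (by rw [← coe_nnnorm, ah_nnnorm_exp, NNReal.coe_one]) _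
end
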